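/- Let $f:\mathbb{R}^d \to \mathbb{R}$ be $2$-smooth with constant $\bar L$, and suppose $\max_{x \in \Theta} \|\nabla f(x)\| \le G$ on a set $\Theta$. Let $K:[-1,1]\to\mathbb{R}$ with $\kappa = \int K^2(u)du < \infty$, let $r \sim U[-1,1]$, and let $\xi_1,\dots,\xi_d,\xi'_1,\dots,\xi'_d$ be random variables independent of $r$ with second moments bounded by $\sigma^2$. Let $x$ be a random variable with values in $\Theta$, independent of $r$. Define $g_j = \frac{1}{2h}(f(x + hre_j) + \xi_j - f(x - hre_j) - \xi'_j)K(r)$. Then $\mathbb{E}\|g\|^2 \le \frac{3d\kappa}{2}\Big(\frac{\sigma^2}{h^2} + \frac{3\bar L^2}{4}h^2\Big) + 9G^2\kappa$. -/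

import Mathlib

open MeasureTheory ProbabilityTheory InnerProductSpace

lemma taylor_sym {E : Type*} [NormedAddCommGroup E] [InnerProductSpace ℝ E] [CompleteSpace E]
    (f : E → ℝ) (L : ℝ) (hdiff : Differentiable ℝ f)
    (hlip : ∀ x x' : E, ‖gradient f x - gradient f x'‖ ≤ L * ‖x - x'‖)
    (x₀ u : E) :
    |f (x₀ + u) - f (x₀ - u) - 2 * (inner ℝ (gradient f x₀) u : ℝ)| ≤ 2 * L * ‖u‖ ^ 2 := by
  rcases eq_or_ne u 0 with rfl | hu
  · simp
  have hL : 0 ≤ L := by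
    have := hlip (x₀ + u) x₀
    have h2 : (0:ℝ) ≤ L * ‖x₀ + u - x₀‖ := le_trans (norm_nonneg _) this
    have : ‖x₀ + u - x₀‖ = ‖u‖ := by simp
    rw [this] at h2
    have hu' : (0:ℝ) < ‖u‖ := norm_pos_iff.mpr hu
    nlinarith
  set g₀ := gradient f x₀ with hg₀
  set φ : E → ℝ := fun z => f z - (innerSL ℝ g₀) z with hφ
  have hφdiff : ∀ z, DifferentiableAt ℝ φ z := fun z =>
    (hdiff z).sub ((innerSL ℝ g₀).differentiableAt)
  have hφd : ∀ z, fderiv ℝ φ z = fderiv ℝ f z - innerSL ℝ g₀ := by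
    intro z
    rw [hφ]
    rw [fderiv_fun_sub (hdiff z) ((innerSL ℝ g₀).differentiableAt)]
    congr 1
    exact (innerSL ℝ g₀).fderiv
  have hdual : (innerSL ℝ g₀ : E →L[ℝ] ℝ) = toDual ℝ E g₀ := rfl
  have hnorm : ∀ z, ‖fderiv ℝ φ z‖ = ‖gradient f z - g₀‖ := by
    intro z
    rw [hφd z, hdual, hg₀, gradient, gradient, ← (toDual ℝ E).apply_symm_apply (fderiv ℝ f z)]
    rw [← map_sub (toDual ℝ E)]
    rw [(toDual ℝ E).norm_map]
    simp [gradient]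
  have hball : Convex ℝ (Metric.closedBall x₀ ‖u‖) := convex_closedBall _ _
  have hbound : ∀ z ∈ Metric.closedBall x₀ ‖u‖, ‖fderiv ℝ φ z‖ ≤ L * ‖u‖ := by
    intro z hz
    rw [hnorm z]
    calc ‖gradient f z - g₀‖ ≤ L * ‖z - x₀‖ := hlip z x₀
    _ ≤ L * ‖u‖ := by
        apply mul_le_mul_of_nonneg_left _ hL
        simpa [dist_eq_norm] using hz
  have hmem1 : x₀ + u ∈ Metric.closedBall x₀ ‖u‖ := by
    simp [dist_eq_norm]
  have hmem2 : x₀ - u ∈ Metric.closedBall x₀ ‖u‖ := by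
    simp [dist_eq_norm]
  have key := hball.norm_image_sub_le_of_norm_fderiv_le (fun z _ => hφdiff z) hbound hmem2 hmem1
  have e1 : φ (x₀ + u) - φ (x₀ - u)
      = f (x₀ + u) - f (x₀ - u) - 2 * (inner ℝ g₀ u : ℝ) := by
    simp only [hφ, innerSL_apply_apply]
    have : (inner ℝ g₀ (x₀ + u) : ℝ) - inner ℝ g₀ (x₀ - u) = 2 * (inner ℝ g₀ u : ℝ) := by
      rw [inner_add_right, inner_sub_right]; ring
    linarith [this]
  have e2 : ‖x₀ + u - (x₀ - u)‖ = 2 * ‖u‖ := by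
    have : x₀ + u - (x₀ - u) = u + u := by abel
    rw [this, ← two_smul ℝ u, norm_smul]
    simp
  rw [e1, e2, Real.norm_eq_abs] at key
  calc |f (x₀ + u) - f (x₀ - u) - 2 * (inner ℝ g₀ u : ℝ)| ≤ L * ‖u‖ * (2 * ‖u‖) := key
  _ = 2 * L * ‖u‖ ^ 2 := by ring

lemma cs4 (a b c c' : ℝ) : (a + b + c - c')^2 ≤ 15*a^2 + 15/8*b^2 + 5*c^2 + 5*c'^2 := by
  nlinarith [sq_nonneg (a - b/8), sq_nonneg (a - c/3), sq_nonneg (a + c'/3),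
    sq_nonneg (b/8 - c/3), sq_nonneg (b/8 + c'/3), sq_nonneg (c/3 + c'/3),
    sq_nonneg (14*a - b - c + c')]

lemma scalar_step (h R v L c c' Kv Δ : ℝ) (hh : 0 < h) (hR : |R| ≤ 1)
    (hΔ : |Δ - 2*(h*R)*v| ≤ 2*L*(h*R)^2) :
    ((1/(2*h)) * (Δ + c - c') * Kv)^2
      ≤ (15*v^2 + 15/8*L^2*h^2 + 5/(4*h^2)*(c^2+c'^2)) * Kv^2 := by
  have hR2 : R^2 ≤ 1 := by nlinarith [abs_nonneg R, sq_abs R]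
  have hR4 : R^4 ≤ 1 := by nlinarith [sq_nonneg (R^2)]
  have hb2 : (Δ - 2*(h*R)*v)^2 ≤ 4*L^2*h^4*R^4 := by
    have := abs_le.mp hΔ
    nlinarith [this.1, this.2]
  have hbr : (Δ + c - c')^2 ≤ 60*h^2*v^2 + 15/2*L^2*h^4 + 5*c^2 + 5*c'^2 := by
    have hcs := cs4 (2*(h*R)*v) (Δ - 2*(h*R)*v) c c'
    have e : 2*(h*R)*v + (Δ - 2*(h*R)*v) + c - c' = Δ + c - c' := by ring
    rw [e] at hcs
    nlinarith [mul_nonneg (sub_nonneg.mpr hR2) (sq_nonneg (h*v)),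
      mul_nonneg (sub_nonneg.mpr hR4) (sq_nonneg (L*h^2)), sq_nonneg (h*v), sq_nonneg (L*h^2)]
  have h2 : (0:ℝ) < 4*h^2 := by positivity
  have e1 : ((1/(2*h)) * (Δ + c - c') * Kv)^2 = (Δ + c - c')^2 * Kv^2 / (4*h^2) := by
    field_simp; ring
  have e2 : (15*v^2 + 15/8*L^2*h^2 + 5/(4*h^2)*(c^2+c'^2)) * Kv^2
      = (60*h^2*v^2 + 15/2*L^2*h^4 + 5*c^2 + 5*c'^2) * Kv^2 / (4*h^2) := by
    field_simp; ring
  rw [e1, e2]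
  exact div_le_div_of_nonneg_right (mul_le_mul_of_nonneg_right hbr (sq_nonneg Kv)) h2.le


lemma final_arith (dR κ σ Lbar G h : ℝ) (hh : 0 < h) :
    3 * dR * κ / 2 * (σ ^ 2 / h ^ 2 + 3 * Lbar ^ 2 / 4 * h ^ 2) + 9 * G ^ 2 * κ
      - ((15*G^2 + 15/8*dR*Lbar^2*h^2) * (κ/2) + 5/(4*h^2) * (dR*(σ^2*κ)))
      = (1/4)*(dR*σ^2*κ)/h^2 + (3/16)*(dR*Lbar^2*h^2*κ) + (3/2)*(G^2*κ) := by
  have hne : h ≠ 0 := ne_of_gt hh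
  field_simp
  ring

/-- Second-moment bound for the kernel-based `2d`-point gradient estimator
(Lemma 2 of the paper): for a `2`-smooth `f` with gradient bounded by `G` on
`Θ`, kernel second moment `κ`, uniform direction `r` on `[-1,1]`, noise with
second moments bounded by `σ²`, and a `Θ`-valued random point `x` such that
`r` is independent of `(x, ξ, ξ')`, the estimator `g` satisfies
`𝔼‖g‖² ≤ (3dκ/2)(σ²/h² + 3L̄²h²/4) + 9G²κ`. -/
theorem kernel_gradient_estimator_second_moment (d : ℕ) (hd : 0 < d)
    (f : EuclideanSpace ℝ (Fin d) → ℝ) (Lbar : ℝ)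
    (hdiff : Differentiable ℝ f)
    (hlip : ∀ x x' : EuclideanSpace ℝ (Fin d),
      ‖gradient f x - gradient f x'‖ ≤ Lbar * ‖x - x'‖)
    (Θ : Set (EuclideanSpace ℝ (Fin d))) (G : ℝ)
    (hG : ∀ y ∈ Θ, ‖gradient f y‖ ≤ G)
    (K : ℝ → ℝ) (hKint : IntegrableOn (fun u => K u ^ 2) (Set.Icc (-1 : ℝ) 1))
    (κ : ℝ) (hκ : κ = ∫ u in Set.Icc (-1 : ℝ) 1, K u ^ 2)
    (Ω : Type*) [MeasureSpace Ω] [IsProbabilityMeasure (volume : Measure Ω)]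
    (r : Ω → ℝ) (hrmeas : Measurable r)
    (hrlaw : Measure.map r (volume : Measure Ω) =
      (volume (Set.Icc (-1 : ℝ) 1))⁻¹ • volume.restrict (Set.Icc (-1 : ℝ) 1))
    (σ : ℝ) (hσ : 0 ≤ σ)
    (ξ ξ' : Fin d → Ω → ℝ)
    (hξmom : ∀ j, Integrable (fun ω => ξ j ω ^ 2) ∧ ∫ ω, ξ j ω ^ 2 ≤ σ ^ 2)
    (hξ'mom : ∀ j, Integrable (fun ω => ξ' j ω ^ 2) ∧ ∫ ω, ξ' j ω ^ 2 ≤ σ ^ 2)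
    (x : Ω → EuclideanSpace ℝ (Fin d)) (hxΘ : ∀ ω, x ω ∈ Θ)
    (hindep : IndepFun r
      (fun ω => (x ω, fun j => (ξ j ω, ξ' j ω))) (volume : Measure Ω))
    (h : ℝ) (hh : 0 < h)
    (g : Ω → EuclideanSpace ℝ (Fin d))
    (hg : ∀ ω j, g ω j = (1 / (2 * h)) *
      ((f (x ω + (h * r ω) • EuclideanSpace.single j (1 : ℝ)) + ξ j ω)
        - (f (x ω - (h * r ω) • EuclideanSpace.single j (1 : ℝ)) + ξ' j ω)) * K (r ω)) :
    ∫ ω, ‖g ω‖ ^ 2 ≤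
      3 * d * κ / 2 * (σ ^ 2 / h ^ 2 + 3 * Lbar ^ 2 / 4 * h ^ 2) + 9 * G ^ 2 * κ := by
  have hκ0 : 0 ≤ κ := by
    rw [hκ]; exact setIntegral_nonneg measurableSet_Icc (fun u _ => sq_nonneg _)
  have hd0 : (0:ℝ) ≤ (d:ℝ) := Nat.cast_nonneg d
  have h2 : (0:ℝ) < h^2 := by positivity
  by_cases hgint : Integrable (fun ω => ‖g ω‖ ^ 2) (volume : Measure Ω)
  swap
  · rw [integral_undef hgint]
    have b1 : (0:ℝ) ≤ σ ^ 2 / h ^ 2 + 3 * Lbar ^ 2 / 4 * h ^ 2 := by positivity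
    have b2 : (0:ℝ) ≤ 3 * (d:ℝ) * κ / 2 :=
      div_nonneg (mul_nonneg (mul_nonneg (by norm_num) hd0) hκ0) (by norm_num)
    have b3 : (0:ℝ) ≤ 9 * G ^ 2 * κ :=
      mul_nonneg (mul_nonneg (by norm_num) (sq_nonneg G)) hκ0
    nlinarith [mul_nonneg b2 b1]
  -- constants for the uniform law
  have hc2 : volume (Set.Icc (-1:ℝ) 1) = ENNReal.ofReal 2 := by
    rw [Real.volume_Icc]; norm_num
  have hc0 : (volume (Set.Icc (-1:ℝ) 1))⁻¹ ≠ 0 := by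
    rw [hc2]; simp
  have hctop : (volume (Set.Icc (-1:ℝ) 1))⁻¹ ≠ ⊤ := by
    rw [hc2]
    simp [ENNReal.inv_ne_top]
  have hcr : (volume (Set.Icc (-1:ℝ) 1))⁻¹.toReal = 1/2 := by
    rw [hc2, ENNReal.toReal_inv, ENNReal.toReal_ofReal (by norm_num : (0:ℝ) ≤ 2)]
    norm_num
  -- a.e. r ω ∈ [-1,1]
  have haem : ∀ᵐ ω, r ω ∈ Set.Icc (-1:ℝ) 1 := by
    rw [ae_iff]
    have : {ω | ¬ r ω ∈ Set.Icc (-1:ℝ) 1} = r ⁻¹' (Set.Icc (-1:ℝ) 1)ᶜ := rfl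
    rw [this, ← Measure.map_apply hrmeas measurableSet_Icc.compl, hrlaw]
    simp [Measure.restrict_apply, Measure.smul_apply]
  -- measurable modification of K² composed with r
  have hKam : AEMeasurable (fun u => K u ^ 2) (Measure.map r volume) := by
    rw [hrlaw]
    exact (aemeasurable_smul_measure_iff hc0).mpr hKint.aemeasurable
  obtain ⟨φ, hφm, hφeq⟩ := hKam
  have hKr_eq : (fun ω => K (r ω) ^ 2) =ᵐ[(volume : Measure Ω)] (fun ω => φ (r ω)) :=
    ae_eq_comp hrmeas.aemeasurable hφeq
  have hφres : (fun u => K u ^ 2) =ᵐ[volume.restrict (Set.Icc (-1:ℝ) 1)] φ := by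
    have h' := hφeq; rw [hrlaw] at h'
    exact (Measure.ae_ennreal_smul_measure_iff hc0).mp h'
  have hφint_map : Integrable φ (Measure.map r volume) := by
    rw [hrlaw]
    exact (hKint.congr hφres).smul_measure hctop
  have hKrInt : Integrable (fun ω => φ (r ω)) (volume : Measure Ω) :=
    (integrable_map_measure hφm.aestronglyMeasurable hrmeas.aemeasurable).mp hφint_map
  have hKrVal : ∫ ω, φ (r ω) = κ / 2 := by
    rw [← integral_map hrmeas.aemeasurable hφm.aestronglyMeasurable, hrlaw,
      integral_smul_measure, hcr, ← integral_congr_ae hφres, ← hκ]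
    rw [smul_eq_mul]; ring
  -- independence of noise squares and φ ∘ r
  have hindξ : ∀ j, IndepFun (fun ω => φ (r ω)) (fun ω => ξ j ω ^ 2) (volume : Measure Ω) := by
    intro j
    have hp : Measurable (fun y : (EuclideanSpace ℝ (Fin d)) × (Fin d → ℝ × ℝ) =>
        ((y.2 j).1)^2) := by fun_prop
    exact hindep.comp hφm hp
  have hindξ' : ∀ j, IndepFun (fun ω => φ (r ω)) (fun ω => ξ' j ω ^ 2) (volume : Measure Ω) := by
    intro j
    have hp : Measurable (fun y : (EuclideanSpace ℝ (Fin d)) × (Fin d → ℝ × ℝ) =>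
        ((y.2 j).2)^2) := by fun_prop
    exact hindep.comp hφm hp
  have hmulInt : ∀ j, Integrable (fun ω => ξ j ω ^ 2 * φ (r ω)) (volume : Measure Ω) := fun j =>
    (hindξ j).symm.integrable_mul (hξmom j).1 hKrInt
  have hmulInt' : ∀ j, Integrable (fun ω => ξ' j ω ^ 2 * φ (r ω)) (volume : Measure Ω) := fun j =>
    (hindξ' j).symm.integrable_mul (hξ'mom j).1 hKrInt
  have hmulVal : ∀ j, ∫ ω, ξ j ω ^ 2 * φ (r ω) ≤ σ^2 * (κ/2) := by
    intro j
    have hmm : ∫ ω, ξ j ω ^ 2 * φ (r ω) = (∫ ω, ξ j ω ^ 2) * (κ/2) := by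
      rw [← hKrVal]
      exact (hindξ j).symm.integral_fun_mul_eq_mul_integral (hξmom j).1.aestronglyMeasurable
        (hφm.comp hrmeas).aestronglyMeasurable
    rw [hmm]
    exact mul_le_mul_of_nonneg_right (hξmom j).2 (by linarith)
  have hmulVal' : ∀ j, ∫ ω, ξ' j ω ^ 2 * φ (r ω) ≤ σ^2 * (κ/2) := by
    intro j
    have hmm : ∫ ω, ξ' j ω ^ 2 * φ (r ω) = (∫ ω, ξ' j ω ^ 2) * (κ/2) := by
      rw [← hKrVal]
      exact (hindξ' j).symm.integral_fun_mul_eq_mul_integral (hξ'mom j).1.aestronglyMeasurable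
        (hφm.comp hrmeas).aestronglyMeasurable
    rw [hmm]
    exact mul_le_mul_of_nonneg_right (hξ'mom j).2 (by linarith)
  -- the bounding function
  set B : Ω → ℝ := fun ω => (15*G^2 + 15/8*(d:ℝ)*Lbar^2*h^2) * φ (r ω)
      + 5/(4*h^2) * ∑ j : Fin d, (ξ j ω ^ 2 * φ (r ω) + ξ' j ω ^ 2 * φ (r ω)) with hB
  have hadd : ∀ j : Fin d, Integrable
      (fun ω => ξ j ω ^ 2 * φ (r ω) + ξ' j ω ^ 2 * φ (r ω)) (volume : Measure Ω) :=
    fun j => (hmulInt j).add (hmulInt' j)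
  have hSumInt : Integrable (fun ω => ∑ j : Fin d,
      (ξ j ω ^ 2 * φ (r ω) + ξ' j ω ^ 2 * φ (r ω))) (volume : Measure Ω) :=
    integrable_finset_sum _ (fun j _ => hadd j)
  have hBint : Integrable B (volume : Measure Ω) :=
    ((hKrInt.const_mul _).add (hSumInt.const_mul _))
  -- pointwise a.e. bound
  have hpt : ∀ᵐ ω, ‖g ω‖^2 ≤ B ω := by
    filter_upwards [haem, hKr_eq] with ω hω hKω
    have hRabs : |r ω| ≤ 1 := abs_le.mpr ⟨hω.1, hω.2⟩
    have hnorm : ‖g ω‖^2 = ∑ j : Fin d, (g ω j)^2 := by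
      rw [EuclideanSpace.norm_eq,
        Real.sq_sqrt (Finset.sum_nonneg fun j _ => sq_nonneg _)]
      simp [Real.norm_eq_abs, sq_abs]
    have hgrad : ‖gradient f (x ω)‖^2 = ∑ j : Fin d, (gradient f (x ω) j)^2 := by
      rw [EuclideanSpace.norm_eq,
        Real.sq_sqrt (Finset.sum_nonneg fun j _ => sq_nonneg _)]
      simp [Real.norm_eq_abs, sq_abs]
    rw [hnorm]
    have hper : ∀ j : Fin d, (g ω j)^2 ≤ (15*(gradient f (x ω) j)^2 + 15/8*Lbar^2*h^2
        + 5/(4*h^2)*((ξ j ω)^2 + (ξ' j ω)^2)) * (K (r ω))^2 := by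
      intro j
      have ht := taylor_sym f Lbar hdiff hlip (x ω)
        ((h * r ω) • EuclideanSpace.single j (1:ℝ))
      have hi : (inner ℝ (gradient f (x ω)) ((h * r ω) • EuclideanSpace.single j (1:ℝ)) : ℝ)
          = (h * r ω) * (gradient f (x ω) j) := by
        rw [real_inner_smul_right, EuclideanSpace.inner_single_right]
        simp
      have hn : ‖(h * r ω) • EuclideanSpace.single j (1:ℝ)‖^2 = (h * r ω)^2 := by
        rw [norm_smul, EuclideanSpace.norm_single]
        simp [Real.norm_eq_abs, sq_abs, mul_pow]
      rw [hi, hn] at ht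
      have ht' : |(f (x ω + (h * r ω) • EuclideanSpace.single j (1:ℝ))
            - f (x ω - (h * r ω) • EuclideanSpace.single j (1:ℝ)))
            - 2*(h * r ω)*(gradient f (x ω) j)| ≤ 2*Lbar*(h * r ω)^2 := by
        have e : 2*(h * r ω)*(gradient f (x ω) j) = 2 * ((h * r ω) * (gradient f (x ω) j)) := by
          ring
        rw [e]; exact ht
      have hs := scalar_step h (r ω) (gradient f (x ω) j) Lbar (ξ j ω) (ξ' j ω) (K (r ω))
        _ hh hRabs ht'
      rw [hg ω j]
      have e : (f (x ω + (h * r ω) • EuclideanSpace.single j (1:ℝ)) + ξ j ω)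
          - (f (x ω - (h * r ω) • EuclideanSpace.single j (1:ℝ)) + ξ' j ω)
          = (f (x ω + (h * r ω) • EuclideanSpace.single j (1:ℝ))
            - f (x ω - (h * r ω) • EuclideanSpace.single j (1:ℝ))) + ξ j ω - ξ' j ω := by
        ring
      rw [e]
      exact hs
    have hKv2 : (0:ℝ) ≤ (K (r ω))^2 := sq_nonneg _
    have hg2 : ∑ j : Fin d, (gradient f (x ω) j)^2 ≤ G^2 := by
      rw [← hgrad]
      exact pow_le_pow_left₀ (norm_nonneg _) (hG _ (hxΘ ω)) 2
    calc ∑ j : Fin d, (g ω j)^2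
        ≤ ∑ j : Fin d, (15*(gradient f (x ω) j)^2 + 15/8*Lbar^2*h^2
            + 5/(4*h^2)*((ξ j ω)^2 + (ξ' j ω)^2)) * (K (r ω))^2 :=
          Finset.sum_le_sum (fun j _ => hper j)
      _ = 15*(∑ j : Fin d, (gradient f (x ω) j)^2)*(K (r ω))^2
            + (d:ℝ)*(15/8*Lbar^2*h^2*(K (r ω))^2)
            + 5/(4*h^2) * ∑ j : Fin d,
              (ξ j ω ^ 2 * (K (r ω))^2 + ξ' j ω ^ 2 * (K (r ω))^2) := by
          rw [Finset.sum_congr rfl (fun j _ => by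
            ring : ∀ j ∈ Finset.univ, (15*(gradient f (x ω) j)^2 + 15/8*Lbar^2*h^2
              + 5/(4*h^2)*((ξ j ω)^2 + (ξ' j ω)^2)) * (K (r ω))^2
              = 15*(gradient f (x ω) j)^2*(K (r ω))^2 + 15/8*Lbar^2*h^2*(K (r ω))^2
                + 5/(4*h^2)*(ξ j ω ^ 2 * (K (r ω))^2 + ξ' j ω ^ 2 * (K (r ω))^2))]
          rw [Finset.sum_add_distrib, Finset.sum_add_distrib, Finset.sum_const,
            Finset.card_univ, Fintype.card_fin, ← Finset.sum_mul, ← Finset.mul_sum,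
            ← Finset.mul_sum]
          push_cast
          ring
      _ ≤ B ω := by
          rw [hB]
          simp only
          rw [← hKω]
          have hmul := mul_le_mul_of_nonneg_right hg2 hKv2
          nlinarith [hmul]
  calc ∫ ω, ‖g ω‖^2 ≤ ∫ ω, B ω := integral_mono_ae hgint hBint hpt
    _ = (15*G^2 + 15/8*(d:ℝ)*Lbar^2*h^2) * (κ/2)
        + 5/(4*h^2) * ∑ j : Fin d,
          ((∫ ω, ξ j ω ^ 2 * φ (r ω)) + (∫ ω, ξ' j ω ^ 2 * φ (r ω))) := by
        rw [hB]
        simp only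
        rw [integral_add (hKrInt.const_mul _) (hSumInt.const_mul _),
          integral_const_mul, integral_const_mul, hKrVal,
          integral_finset_sum _ (fun j _ => hadd j)]
        congr 1
        congr 1
        exact Finset.sum_congr rfl (fun j _ => integral_add (hmulInt j) (hmulInt' j))
    _ ≤ (15*G^2 + 15/8*(d:ℝ)*Lbar^2*h^2) * (κ/2) + 5/(4*h^2) * ((d:ℝ)*(σ^2*κ)) := by
        have hsum : ∑ j : Fin d, ((∫ ω, ξ j ω ^ 2 * φ (r ω)) + (∫ ω, ξ' j ω ^ 2 * φ (r ω)))
            ≤ (d:ℝ)*(σ^2*κ) := by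
          calc ∑ j : Fin d, ((∫ ω, ξ j ω ^ 2 * φ (r ω)) + (∫ ω, ξ' j ω ^ 2 * φ (r ω)))
              ≤ ∑ _j : Fin d, (σ^2*(κ/2) + σ^2*(κ/2)) :=
                Finset.sum_le_sum (fun j _ => add_le_add (hmulVal j) (hmulVal' j))
            _ = (d:ℝ)*(σ^2*κ) := by
                rw [Finset.sum_const, Finset.card_univ, Fintype.card_fin]
                push_cast; ring
        have hc₂ : (0:ℝ) ≤ 5/(4*h^2) := by positivity
        nlinarith [mul_le_mul_of_nonneg_left hsum hc₂]
    _ ≤ 3 * d * κ / 2 * (σ ^ 2 / h ^ 2 + 3 * Lbar ^ 2 / 4 * h ^ 2) + 9 * G ^ 2 * κ := by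
        rw [← sub_nonneg]
        have e3 : 3 * (d:ℝ) * κ / 2 * (σ ^ 2 / h ^ 2 + 3 * Lbar ^ 2 / 4 * h ^ 2) + 9 * G ^ 2 * κ
            - ((15*G^2 + 15/8*(d:ℝ)*Lbar^2*h^2) * (κ/2) + 5/(4*h^2) * ((d:ℝ)*(σ^2*κ)))
            = (1/4)*((d:ℝ)*σ^2*κ)/h^2 + (3/16)*((d:ℝ)*Lbar^2*h^2*κ) + (3/2)*(G^2*κ) :=
          final_arith (d:ℝ) κ σ Lbar G h hh
        rw [e3]
        have t1 : (0:ℝ) ≤ (1/4)*((d:ℝ)*σ^2*κ)/h^2 :=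
          div_nonneg (mul_nonneg (by norm_num)
            (mul_nonneg (mul_nonneg hd0 (sq_nonneg σ)) hκ0)) h2.le
        have t2 : (0:ℝ) ≤ (3/16)*((d:ℝ)*Lbar^2*h^2*κ) :=
          mul_nonneg (by norm_num)
            (mul_nonneg (mul_nonneg (mul_nonneg hd0 (sq_nonneg Lbar)) h2.le) hκ0)
        have t3 : (0:ℝ) ≤ (3/2)*(G^2*κ) :=
          mul_nonneg (by norm_num) (mul_nonneg (sq_nonneg G) hκ0)
        linarith
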